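/- Let A ∈ M_{m×km} and x ∈ V. Then there exists a monic polynomial q(z) = z^n + c_{n−1} z^{n−1} + ⋯ + c₀ with real coefficients such that q(A) ⃗⋉ x := A^n ⃗⋉ x ⃗∓ c_{n−1} A^{n−1} ⃗⋉ x ⃗∓ ⋯ ⃗∓ c₁ A ⃗⋉ x ⃗∓ c₀ x = 0, i.e., every vector admits an A-annihilator polynomial. -/

import Mathlib

/-- `x ⊗ 1_t` for a (ℕ-indexed) column vector `x`: entry `i` is `x (i / t)`. -/
def stretch (x : ℕ → ℝ) (t : ℕ) : ℕ → ℝ := fun i => x (i / t)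

/-- `A ⊗ I_c` for a matrix `A` with `m` rows (entries outside the `m*c` rows are 0). -/
def kronId (A : ℕ → ℕ → ℝ) (m c : ℕ) : ℕ → ℕ → ℝ :=
  fun i j => if i < m * c then A (i / c) (j / c) * (if i % c = j % c then (1:ℝ) else 0) else 0

/-- product of a matrix with `s` columns with a vector of length `s`. -/
def mulVecN (M : ℕ → ℕ → ℝ) (s : ℕ) (v : ℕ → ℝ) : ℕ → ℝ :=
  fun i => ∑ j ∈ Finset.range s, M i j * v j

/-- V-product `A ⃗⋉ x` of `A ∈ M_{m×n}` with `x ∈ V_r`: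
`(A ⊗ I_{s/n})(x ⊗ 1_{s/r})` with `s = lcm(n,r)`. -/
def vProd (A : ℕ → ℕ → ℝ) (m n : ℕ) (x : ℕ → ℝ) (r : ℕ) : ℕ → ℝ :=
  mulVecN (kronId A m (Nat.lcm n r / n)) (Nat.lcm n r) (stretch x (Nat.lcm n r / r))

/-- V-addition `x ⃗∓ y` of `x ∈ V_n` and `y ∈ V_r`:
`(x ⊗ 1_{s/n}) + (y ⊗ 1_{s/r})` with `s = lcm(n,r)`. -/
def vAdd (x : ℕ → ℝ) (n : ℕ) (y : ℕ → ℝ) (r : ℕ) : ℕ → ℝ :=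
  fun i => stretch x (Nat.lcm n r / n) i + stretch y (Nat.lcm n r / r) i

/-- semi-tensor product `A ⋉ B` of `A ∈ M_{m×n}` and `B ∈ M_{p×q}`:
`(A ⊗ I_{t/n})(B ⊗ I_{t/p})` with `t = lcm(n,p)`. -/
def stp (A : ℕ → ℕ → ℝ) (m n : ℕ) (B : ℕ → ℕ → ℝ) (p : ℕ) : ℕ → ℕ → ℝ :=
  fun i l => ∑ j ∈ Finset.range (Nat.lcm n p),
    kronId A m (Nat.lcm n p / n) i j * kronId B p (Nat.lcm n p / p) j l

/-- `t`-fold semi-tensor power of `A ∈ M_{m×(k·m)}` (`stpPow A m k 0` is `I_m`,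
and `stpPow A m k (t+1) = A ⋉ stpPow A m k t ∈ M_{m×(k^(t+1)·m)}`). -/
def stpPow (A : ℕ → ℕ → ℝ) (m k : ℕ) : ℕ → (ℕ → ℕ → ℝ)
  | 0 => fun i j => if i = j ∧ i < m then (1:ℝ) else 0
  | t+1 => stp A m (k*m) (stpPow A m k t) m

/-- every vector `x ∈ V_p` admits a (monic) `A`-annihilator polynomial
`q(z) = z^n + c_{n-1}z^{n-1} + ⋯ + c₀` for `A ∈ M_{m×(k·m)}`, i.e. the V-sum
`A^n ⃗⋉ x ⃗∓ c_{n-1} A^{n-1} ⃗⋉ x ⃗∓ ⋯ ⃗∓ c₀ x = 0` (all terms stretched to the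
common dimension `D = lcm` of the dimensions of the individual terms). -/
lemma lcm_div_left' {a b : ℕ} (ha : 0 < a) : Nat.lcm a b / a = b / Nat.gcd a b := by
  rw [Nat.lcm, Nat.mul_div_assoc a (Nat.gcd_dvd_right a b), Nat.mul_div_cancel_left _ ha]

theorem exists_annihilator (m k p : ℕ) (hm : 0 < m) (hk : 0 < k) (hp : 0 < p)
    (A : ℕ → ℕ → ℝ) (x : ℕ → ℝ) :
    ∃ n : ℕ, 0 < n ∧ ∃ c : ℕ → ℝ, c n = 1 ∧
      ∀ j : ℕ,
        (∑ i ∈ Finset.range (n + 1),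
          c i * stretch
            (if i = 0 then (fun l => if l < p then x l else 0)
             else vProd (stpPow A m k i) m (k ^ i * m) x p)
            ((Finset.range (n + 1)).lcm
                (fun i' => if i' = 0 then p
                  else m * (Nat.lcm (k ^ i' * m) p / (k ^ i' * m)))
              / (if i = 0 then p else m * (Nat.lcm (k ^ i * m) p / (k ^ i * m)))) j)
          = 0 := by
  classical
  have hkm : ∀ i : ℕ, 0 < k ^ i * m := fun i => Nat.mul_pos (pow_pos hk i) hm
  -- the gcd sequence is eventually constant
  obtain ⟨N, hN1, hNconst⟩ : ∃ N, 1 ≤ N ∧ ∀ i, N ≤ i →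
      Nat.gcd (k ^ i * m) p = Nat.gcd (k ^ N * m) p := by
    set g : ℕ → ℕ := fun i => Nat.gcd (k ^ i * m) p with hgdef
    have hgpos : ∀ i, 0 < g i := fun i => Nat.gcd_pos_of_pos_right _ hp
    have hgmono : Monotone g := by
      intro i j hij
      refine Nat.le_of_dvd (hgpos j) (Nat.dvd_gcd ?_ (Nat.gcd_dvd_right _ _))
      exact (Nat.gcd_dvd_left _ _).trans (Nat.mul_dvd_mul_right (pow_dvd_pow k hij) m)
    have hgle : ∀ i, g i ≤ p := fun i => Nat.le_of_dvd hp (Nat.gcd_dvd_right _ _)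
    have hne : (Set.range g).Nonempty := ⟨g 0, 0, rfl⟩
    have hbdd : BddAbove (Set.range g) := ⟨p, by rintro _ ⟨i, rfl⟩; exact hgle i⟩
    obtain ⟨N₀, hN₀⟩ := Nat.sSup_mem hne hbdd
    refine ⟨max N₀ 1, le_max_right _ _, fun i hi => ?_⟩
    have h1 : g i ≤ g N₀ := hN₀ ▸ le_csSup hbdd ⟨i, rfl⟩
    exact le_antisymm (h1.trans (hgmono (le_max_left _ _))) (hgmono hi)
  set d : ℕ := m * (Nat.lcm (k ^ N * m) p / (k ^ N * m)) with hddef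
  have hdconst : ∀ i, N ≤ i → m * (Nat.lcm (k ^ i * m) p / (k ^ i * m)) = d := by
    intro i hi
    rw [hddef, lcm_div_left' (hkm i), lcm_div_left' (hkm N), hNconst i hi]
  have hdconst' : ∀ i, N ≤ i →
      (if i = 0 then p else m * (Nat.lcm (k ^ i * m) p / (k ^ i * m))) = d := by
    intro i hi
    rw [if_neg (by omega), hdconst i hi]
  -- support lemma
  have hsupp : ∀ i l : ℕ, m * (Nat.lcm (k ^ i * m) p / (k ^ i * m)) ≤ l →
      vProd (stpPow A m k i) m (k ^ i * m) x p l = 0 := by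
    intro i l hl
    unfold vProd mulVecN
    apply Finset.sum_eq_zero
    intro jj _
    unfold kronId
    rw [if_neg (Nat.not_lt.mpr hl), zero_mul]
  -- linear dependence
  set v : Fin (d + 1) → (Fin d → ℝ) :=
    fun i jj => vProd (stpPow A m k (N + i)) m (k ^ (N + (i : ℕ)) * m) x p jj with hvdef
  have hnli : ¬ LinearIndependent ℝ v := by
    intro h
    have h1 := h.fintype_card_le_finrank
    rw [Module.finrank_fin_fun, Fintype.card_fin] at h1
    omega
  obtain ⟨gc, hsum, i₀, hi₀⟩ := Fintype.not_linearIndependent_iff.mp hnli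
  set S : Finset (Fin (d + 1)) := Finset.univ.filter (fun i => gc i ≠ 0) with hSdef
  have hSne : S.Nonempty := ⟨i₀, Finset.mem_filter.mpr ⟨Finset.mem_univ _, hi₀⟩⟩
  set imax : Fin (d + 1) := S.max' hSne with himaxdef
  have himax_ne : gc imax ≠ 0 := (Finset.mem_filter.mp (S.max'_mem hSne)).2
  have hgt : ∀ i : Fin (d + 1), (imax : ℕ) < (i : ℕ) → gc i = 0 := by
    intro i hi
    by_contra h
    have := S.le_max' i (Finset.mem_filter.mpr ⟨Finset.mem_univ _, h⟩)
    exact absurd (Fin.le_def.mp this) (by omega)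
  set gg : ℕ → ℝ := fun t => if h : t < d + 1 then gc ⟨t, h⟩ else 0 with hggdef
  set n : ℕ := N + (imax : ℕ) with hndef
  refine ⟨n, by omega, fun i => if N ≤ i then gg (i - N) / gc imax else 0, ?_, ?_⟩
  · -- monic
    show (if N ≤ n then gg (n - N) / gc imax else 0) = 1
    rw [if_pos (by omega)]
    have h1 : n - N = (imax : ℕ) := by omega
    rw [h1]
    simp only [hggdef]
    rw [dif_pos imax.isLt]
    rw [Fin.eta]
    exact div_self himax_ne
  · intro j
    set D : ℕ := (Finset.range (n + 1)).lcm
      (fun i' => if i' = 0 then p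
        else m * (Nat.lcm (k ^ i' * m) p / (k ^ i' * m))) with hDdef
    set l : ℕ := j / (D / d) with hldef
    set w : ℕ → ℝ := fun i => vProd (stpPow A m k i) m (k ^ i * m) x p l with hwdef
    have key : ∀ i ∈ Finset.range (n + 1),
        (if N ≤ i then gg (i - N) / gc imax else 0) * stretch
          (if i = 0 then (fun l => if l < p then x l else 0)
           else vProd (stpPow A m k i) m (k ^ i * m) x p)
          (D / (if i = 0 then p else m * (Nat.lcm (k ^ i * m) p / (k ^ i * m)))) j
        = if N ≤ i then gg (i - N) * w i / gc imax else 0 := by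
      intro i _
      by_cases hNi : N ≤ i
      · rw [if_pos hNi, if_pos hNi, if_neg (by omega : ¬ i = 0), hdconst' i hNi]
        show gg (i - N) / gc imax * (vProd (stpPow A m k i) m (k ^ i * m) x p (j / (D / d)))
          = gg (i - N) * w i / gc imax
        rw [hwdef]
        rw [div_mul_eq_mul_div]
      · rw [if_neg hNi, if_neg hNi, zero_mul]
    rw [Finset.sum_congr rfl key]
    have hstep1 : ∑ i ∈ Finset.range (n + 1),
        (if N ≤ i then gg (i - N) * w i / gc imax else 0)
        = ∑ i ∈ Finset.Ico N (n + 1), gg (i - N) * w i / gc imax := by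
      rw [Finset.range_eq_Ico, ← Finset.sum_Ico_consecutive _ (Nat.zero_le N) (by omega : N ≤ n + 1)]
      rw [Finset.sum_congr rfl (fun i hi => if_neg (by
        exact Nat.not_le.mpr (Finset.mem_Ico.mp hi).2)), Finset.sum_const_zero, zero_add]
      exact Finset.sum_congr rfl (fun i hi => if_pos (Finset.mem_Ico.mp hi).1)
    rw [hstep1]
    have hstep2 : ∑ i ∈ Finset.Ico N (n + 1), gg (i - N) * w i / gc imax
        = ∑ t ∈ Finset.range ((imax : ℕ) + 1), gg t * w (N + t) / gc imax := by
      rw [Finset.sum_Ico_eq_sum_range, show n + 1 - N = (imax : ℕ) + 1 by omega]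
      exact Finset.sum_congr rfl (fun t _ => by rw [Nat.add_sub_cancel_left])
    rw [hstep2]
    have hstep3 : ∑ t ∈ Finset.range ((imax : ℕ) + 1), gg t * w (N + t) / gc imax
        = ∑ t ∈ Finset.range (d + 1), gg t * w (N + t) / gc imax := by
      apply Finset.sum_subset (Finset.range_subset_range.mpr (by omega))
      intro t ht hnt
      have h1 : (imax : ℕ) < t := by
        simp only [Finset.mem_range] at ht hnt; omega
      have h2 : t < d + 1 := Finset.mem_range.mp ht
      have h3 : gg t = 0 := by
        simp only [hggdef]; rw [dif_pos h2]; exact hgt ⟨t, h2⟩ h1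
      rw [h3, zero_mul, zero_div]
    rw [hstep3, ← Finset.sum_div]
    have hZ : ∑ t ∈ Finset.range (d + 1), gg t * w (N + t) = 0 := by
      by_cases hl : l < d
      · have h0 := congrFun hsum ⟨l, hl⟩
        rw [Finset.sum_apply] at h0
        simp only [Pi.smul_apply, smul_eq_mul, Pi.zero_apply, hvdef] at h0
        rw [← Fin.sum_univ_eq_sum_range (fun t => gg t * w (N + t)) (d + 1)]
        rw [← h0]
        apply Finset.sum_congr rfl
        intro i _
        have hgg : gg (i : ℕ) = gc i := by
          simp only [hggdef]; rw [dif_pos i.isLt, Fin.eta]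
        rw [hgg, hwdef]
      · apply Finset.sum_eq_zero
        intro t _
        have h0 : w (N + t) = 0 := by
          rw [hwdef]
          exact hsupp (N + t) l (by rw [hdconst (N + t) (by omega)]; omega)
        rw [h0, mul_zero]
    rw [hZ, zero_div]
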